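/- Let R be an LM-system, l → r ∈ R with root pair (f, g), and let s = f(s1,…,sm) and t = g(t1,…,tn) be joinable modulo R. Then f(ŝ1,…,ŝm) rewrites in one step by the rule l → r to g(t̂1,…,t̂n), where ŝi, t̂j denote the R-normal forms of si, tj; in particular the common normal form of s and t is an instance of r. -/

import Mathlib

/-! Basic first-order terms, positions, substitutions and rewriting. -/

inductive Term (F : Type) : Type
  | var : Nat → Term F
  | app : F → List (Term F) → Term F

namespace Term

def subst {F : Type} (σ : Nat → Term F) : Term F → Term F
  | var n => σ n
  | app f ts => app f (ts.attach.map fun ⟨t, _⟩ => t.subst σ)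

def root {F : Type} : Term F → Option F
  | var _ => none
  | app f _ => some f

def label {F : Type} : Term F → F ⊕ Nat
  | var n => Sum.inr n
  | app f _ => Sum.inl f

def IsVar {F : Type} : Term F → Prop
  | var _ => True
  | app _ _ => False

def varsL {F : Type} : Term F → List Nat
  | var n => [n]
  | app _ ts => (ts.attach.map fun ⟨t, _⟩ => t.varsL).flatten

end Term

abbrev Rule (F : Type) := Term F × Term F
abbrev TRS (F : Type) := Set (Rule F)

/-- `SubtermAt t p u` : the subterm of `t` at position `p` is `u`. -/
inductive SubtermAt {F : Type} : Term F → List Nat → Term F → Prop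
  | here (t : Term F) : SubtermAt t [] t
  | there {f : F} {ts : List (Term F)} {i : Nat} {u : Term F} {p : List Nat} {v : Term F} :
      ts[i]? = some u → SubtermAt u p v → SubtermAt (Term.app f ts) (i :: p) v

/-- `ReplaceAt t p v t'` : replacing the subterm of `t` at position `p` by `v` yields `t'`. -/
inductive ReplaceAt {F : Type} : Term F → List Nat → Term F → Term F → Prop
  | here (t u : Term F) : ReplaceAt t [] u u
  | there {f : F} {ts : List (Term F)} {i : Nat} {u : Term F} {p : List Nat} {v w : Term F} :
      ts[i]? = some u → ReplaceAt u p v w →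
      ReplaceAt (Term.app f ts) (i :: p) v (Term.app f (ts.set i w))

variable {F : Type}

/-- One rewrite step using the given rule (at some position, with some substitution). -/
def RuleStep (ρ : Rule F) (s t : Term F) : Prop :=
  ∃ (σ : Nat → Term F) (p : List Nat),
    SubtermAt s p (ρ.1.subst σ) ∧ ReplaceAt s p (ρ.2.subst σ) t

def OneStep (R : TRS F) (s t : Term F) : Prop := ∃ ρ ∈ R, RuleStep ρ s t

/-- A rewrite step at the root position. -/
def RootStep (R : TRS F) (s t : Term F) : Prop :=
  ∃ ρ ∈ R, ∃ σ : Nat → Term F, s = ρ.1.subst σ ∧ t = ρ.2.subst σ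

def StarRW (R : TRS F) : Term F → Term F → Prop := Relation.ReflTransGen (OneStep R)
def Plus (R : TRS F) : Term F → Term F → Prop := Relation.TransGen (OneStep R)
/-- Convertibility (the congruence / equational theory generated by `R`). -/
def Conv (R : TRS F) : Term F → Term F → Prop := Relation.EqvGen (OneStep R)
def Joinable (R : TRS F) (s t : Term F) : Prop := ∃ u, StarRW R s u ∧ StarRW R t u
def NormalForm (R : TRS F) (t : Term F) : Prop := ∀ u, ¬ OneStep R t u
/-- `t` is the `R`-normal form of `s`. -/
def NFof (R : TRS F) (s t : Term F) : Prop := StarRW R s t ∧ NormalForm R t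
def Terminating (R : TRS F) : Prop := WellFounded (fun a b : Term F => OneStep R b a)
def Confluent (R : TRS F) : Prop := ∀ s t u, StarRW R s t → StarRW R s u → Joinable R t u
def Convergent (R : TRS F) : Prop := Confluent R ∧ Terminating R

/-- every proper subterm is irreducible -/
def EpsIrreducible (R : TRS F) (t : Term F) : Prop :=
  ∀ p u, SubtermAt t p u → p ≠ [] → NormalForm R u

def InnermostRedex (R : TRS F) (t : Term F) : Prop :=
  EpsIrreducible R t ∧ ¬ NormalForm R t

/-- Forward-closed, via the one-step-to-normal-form characterization. -/
def FCclosed (R : TRS F) : Prop :=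
  ∀ t, InnermostRedex R t → ∀ u, NFof R t u → OneStep R t u

def Unifies (σ : Nat → Term F) (s t : Term F) : Prop := s.subst σ = t.subst σ

def IsMGU (σ : Nat → Term F) (s t : Term F) : Prop :=
  Unifies σ s t ∧ ∀ τ, Unifies τ s t → ∃ δ, ∀ x, τ x = (σ x).subst δ

def IsRenaming (ρ : Nat → Term F) : Prop :=
  ∃ f : Nat → Nat, Function.Injective f ∧ ∀ n, ρ n = Term.var (f n)

/-- Redundancy criterion for an oriented equation `e` whose right-hand side is
reachable from its left-hand side: some proper subterm of the lhs is reducible. -/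
def Redundant (R : TRS F) (e : Rule F) : Prop :=
  ∃ p u, p ≠ ([] : List Nat) ∧ SubtermAt e.1 p u ∧ ¬ NormalForm R u

/-- `R₁ ↝ R₂`: forward overlaps of rules of `R₂` (renamed apart) into
right-hand sides of rules of `R₁`, at non-variable positions, via an mgu. -/
def FStep (R₁ R₂ : TRS F) : TRS F :=
  { e | ∃ (l₁ r₁ l₂ r₂ : Term F) (ρ : Nat → Term F) (p : List Nat) (u : Term F)
          (σ : Nat → Term F) (r₁' : Term F),
      (l₁, r₁) ∈ R₁ ∧ (l₂, r₂) ∈ R₂ ∧ IsRenaming ρ ∧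
      SubtermAt r₁ p u ∧ ¬ u.IsVar ∧ IsMGU σ u (l₂.subst ρ) ∧
      ReplaceAt r₁ p (r₂.subst ρ) r₁' ∧ e = (l₁.subst σ, r₁'.subst σ) }

def FCiter (R : TRS F) : Nat → TRS F
  | 0 => R
  | k + 1 => FCiter R k ∪ { e | e ∈ FStep (FCiter R k) R ∧ ¬ Redundant (FCiter R k) e }

def FCinf (R : TRS F) : TRS F := ⋃ k, FCiter R k

/-- Forward-closed, via the forward-closure construction: `FC(R) = R`. -/
def ForwardClosedFC (R : TRS F) : Prop := FCinf R = R

/-- `RHS(R)`: `R` together with the conclusions of right-hand-side critical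
pair inferences (second rule renamed apart). -/
def RHSset (R : TRS F) : TRS F :=
  R ∪ { e | ∃ (s t u₀ v₀ : Term F) (ρ σ : Nat → Term F), (s, t) ∈ R ∧ (u₀, v₀) ∈ R ∧
        IsRenaming ρ ∧ IsMGU σ t (v₀.subst ρ) ∧
        s.subst σ ≠ (u₀.subst ρ).subst σ ∧ e = (s.subst σ, (u₀.subst ρ).subst σ) }

/-- the (unordered) pairs of root symbols of two equations coincide -/
def RootPairSimilar (e₁ e₂ : Rule F) : Prop :=
  (e₁.1.root = e₂.1.root ∧ e₁.2.root = e₂.2.root) ∨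
  (e₁.1.root = e₂.2.root ∧ e₁.2.root = e₂.1.root)

def QuasiDet (E : TRS F) : Prop :=
  (∀ e ∈ E, ¬ e.1.IsVar ∧ ¬ e.2.IsVar) ∧
  (∀ e ∈ E, e.1.root ≠ e.2.root) ∧
  (∀ e₁ ∈ E, ∀ e₂ ∈ E, e₁ ≠ e₂ → ¬ RootPairSimilar e₁ e₂)

def HasRootPairRepetition (E : TRS F) : Prop :=
  ∃ e₁ ∈ E, ∃ e₂ ∈ E, e₁ ≠ e₂ ∧ RootPairSimilar e₁ e₂

def VarPreserving (R : TRS F) : Prop :=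
  ∀ e ∈ R, ∀ n, n ∈ Term.varsL e.1 ↔ n ∈ Term.varsL e.2

def RightReduced (R : TRS F) : Prop := ∀ e ∈ R, NormalForm R e.2

def AlmostLeftReduced (R : TRS F) : Prop :=
  ¬ ∃ (l₁ r₁ l₂ r₂ : Term F) (p : List Nat) (u : Term F) (σ : Nat → Term F),
      (l₁, r₁) ∈ R ∧ (l₂, r₂) ∈ R ∧ p ≠ [] ∧ SubtermAt l₁ p u ∧ u = l₂.subst σ

def NonSubtermCollapsing (R : TRS F) : Prop :=
  ¬ ∃ (t u : Term F) (p : List Nat), p ≠ [] ∧ SubtermAt u p t ∧ Conv R t u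

structure LMSystem (R : TRS F) : Prop where
  convergent : Convergent R
  almostLeftReduced : AlmostLeftReduced R
  rightReduced : RightReduced R
  nonCollapsing : NonSubtermCollapsing R
  forwardClosed : FCclosed R
  quasiDet : QuasiDet (RHSset R)

/-- the symbol (function symbol or variable) of a term at a position, if defined -/
def labelAt {F : Type} : List Nat → Term F → Option (F ⊕ Nat)
  | [], t => some t.label
  | i :: p, Term.app _ ts => (ts[i]?).bind (labelAt p)
  | _ :: _, Term.var _ => none

/-- outermost distinguishing position -/
def ODP (s t : Term F) (p : List Nat) : Prop :=
  (labelAt p s ≠ none ∨ labelAt p t ≠ none) ∧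
  labelAt p s ≠ labelAt p t ∧
  ∀ q, q <+: p → q ≠ p → labelAt q s = labelAt q t


namespace Term

theorem my_ind {F : Type} {motive : Term F → Prop}
    (hv : ∀ n, motive (var n))
    (ha : ∀ f ts, (∀ t ∈ ts, motive t) → motive (app f ts)) : ∀ t, motive t
  | var n => hv n
  | app f ts => ha f ts (fun t ht => my_ind hv ha t)
termination_by t => sizeOf t
decreasing_by simp_wf; have := List.sizeOf_lt_of_mem ht; omega

theorem attach_map' {α β : Type*} (ts : List α) (g : α → β) :
    (ts.attach.map fun x => g x.1) = ts.map g := by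
  exact List.attach_map_val

@[simp] theorem subst_var' {F : Type} (σ : Nat → Term F) (n : Nat) :
    (var n).subst σ = σ n := by simp [subst]

@[simp] theorem subst_app {F : Type} (σ : Nat → Term F) (f : F) (ts : List (Term F)) :
    (app f ts).subst σ = app f (ts.map (·.subst σ)) := by
  rw [subst, attach_map']

@[simp] theorem varsL_var {F : Type} (n : Nat) : (var n : Term F).varsL = [n] := by
  simp [varsL]

@[simp] theorem varsL_app {F : Type} (f : F) (ts : List (Term F)) :
    (app f ts).varsL = (ts.map varsL).flatten := by
  rw [varsL, attach_map']

end Term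
namespace Term

def size {F : Type} : Term F → Nat
  | var _ => 1
  | app _ ts => 1 + (ts.attach.map fun ⟨t, _⟩ => t.size).sum

@[simp] theorem size_var {F : Type} (n : Nat) : (var n : Term F).size = 1 := by simp [size]

@[simp] theorem size_app {F : Type} (f : F) (ts : List (Term F)) :
    (app f ts).size = 1 + (ts.map size).sum := by rw [size, attach_map']

theorem size_pos {F : Type} (t : Term F) : 0 < t.size := by
  cases t <;> simp

theorem subst_id {F : Type} (t : Term F) : t.subst var = t := by
  induction t using my_ind with
  | hv n => simp
  | ha f ts ih => simp only [subst_app]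
                  rw [List.map_congr_left ih]; simp

theorem subst_subst {F : Type} (t : Term F) (σ τ : Nat → Term F) :
    (t.subst σ).subst τ = t.subst (fun x => (σ x).subst τ) := by
  induction t using my_ind with
  | hv n => simp
  | ha f ts ih =>
    simp only [subst_app, List.map_map]
    congr 1
    exact List.map_congr_left fun t ht => ih t ht

theorem subst_ext {F : Type} {σ τ : Nat → Term F} (t : Term F)
    (h : ∀ x ∈ t.varsL, σ x = τ x) : t.subst σ = t.subst τ := by
  induction t using my_ind with
  | hv n => simpa using h n (by simp)
  | ha f ts ih =>
    simp only [subst_app]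
    congr 1
    refine List.map_congr_left fun t ht => ih t ht fun x hx => h x ?_
    simp only [varsL_app, List.mem_flatten, List.mem_map]
    exact ⟨t.varsL, ⟨t, ht, rfl⟩, hx⟩

theorem mem_varsL_subst {F : Type} {σ : Nat → Term F} {t : Term F} {y : Nat}
    (h : y ∈ (t.subst σ).varsL) : ∃ x ∈ t.varsL, y ∈ (σ x).varsL := by
  induction t using my_ind with
  | hv n => exact ⟨n, by simp, by simpa using h⟩
  | ha f ts ih =>
    simp only [subst_app, varsL_app, List.mem_flatten, List.mem_map, List.map_map] at h
    obtain ⟨l, ⟨t, ht, rfl⟩, hy⟩ := h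
    obtain ⟨x, hx, hyx⟩ := ih t ht hy
    refine ⟨x, ?_, hyx⟩
    simp only [varsL_app, List.mem_flatten, List.mem_map]
    exact ⟨t.varsL, ⟨t, ht, rfl⟩, hx⟩

theorem size_le_subst {F : Type} {σ : Nat → Term F} {t : Term F} {x : Nat}
    (h : x ∈ t.varsL) : (σ x).size ≤ (t.subst σ).size := by
  induction t using my_ind with
  | hv n => simp at h; subst h; simp
  | ha f ts ih =>
    simp only [varsL_app, List.mem_flatten, List.mem_map] at h
    obtain ⟨l, ⟨t, ht, rfl⟩, hx⟩ := h
    calc (σ x).size ≤ (t.subst σ).size := ih t ht hx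
    _ ≤ ((ts.map (·.subst σ)).map size).sum := by
        refine List.single_le_sum (fun _ _ => Nat.zero_le _) _ ?_
        exact List.mem_map_of_mem (List.mem_map_of_mem ht)
    _ ≤ ((app f ts).subst σ).size := by simp [List.map_map]

theorem occurs_ne {F : Type} {σ : Nat → Term F} {f : F} {ts : List (Term F)} {x : Nat}
    (h : x ∈ (app f ts).varsL) : σ x ≠ (app f ts).subst σ := by
  intro he
  simp only [varsL_app, List.mem_flatten, List.mem_map] at h
  obtain ⟨l, ⟨t, ht, rfl⟩, hx⟩ := h
  have h1 : (σ x).size ≤ (t.subst σ).size := size_le_subst hx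
  have h2 : (t.subst σ).size ≤ ((ts.map (·.subst σ)).map size).sum :=
    List.single_le_sum (fun _ _ => Nat.zero_le _) _
      (List.mem_map_of_mem (List.mem_map_of_mem ht))
  have h3 : (σ x).size = ((app f ts).subst σ).size := by rw [he]
  simp only [subst_app, size_app, List.map_map] at h3
  simp only [List.map_map] at h2
  omega

end Term
/-! ### Unification -/

def USys (σ : Nat → Term F) (E : List (Term F × Term F)) : Prop :=
  ∀ p ∈ E, p.1.subst σ = p.2.subst σ

def IsMGUSys (σ : Nat → Term F) (E : List (Term F × Term F)) : Prop :=
  USys σ E ∧ ∀ τ, USys τ E → ∃ δ, ∀ x, τ x = (σ x).subst δ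

def VE (E : List (Term F × Term F)) : Finset ℕ :=
  (E.flatMap fun p => p.1.varsL ++ p.2.varsL).toFinset

def SE (E : List (Term F × Term F)) : ℕ :=
  (E.map fun p => p.1.size + p.2.size).sum

theorem mem_VE {E : List (Term F × Term F)} {y : Nat} :
    y ∈ VE E ↔ ∃ p ∈ E, y ∈ p.1.varsL ∨ y ∈ p.2.varsL := by
  simp [VE, List.mem_flatMap]

/-- the elimination substitution `[x ↦ v]` -/
def elimS (x : Nat) (v : Term F) : Nat → Term F := fun z => if z = x then v else Term.var z

theorem subst_elim_eq {x : Nat} {v : Term F} {τ : Nat → Term F} (hτ : τ x = v.subst τ)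
    (s : Term F) : (s.subst (elimS x v)).subst τ = s.subst τ := by
  rw [Term.subst_subst]
  refine Term.subst_ext s fun z _ => ?_
  by_cases hz : z = x
  · subst hz; simp [elimS, hτ.symm]
  · simp [elimS, hz]

theorem bind_mgu {x : Nat} {v : Term F} {E' : List (Term F × Term F)} {σ' : Nat → Term F}
    (hx : x ∉ v.varsL)
    (hσ' : IsMGUSys σ' (E'.map fun p => (p.1.subst (elimS x v), p.2.subst (elimS x v)))) :
    IsMGUSys (fun z => ((elimS x v) z).subst σ') ((Term.var x, v) :: E') := by
  have hvθ : v.subst (elimS x v) = v := by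
    rw [show v = v.subst Term.var from (Term.subst_id v).symm]
    rw [Term.subst_subst]
    exact Term.subst_ext v fun z hz => by
      have : z ≠ x := fun h => hx (h ▸ hz)
      simp [elimS, this]
  constructor
  · intro p hp
    rcases List.mem_cons.1 hp with h | h
    · subst h
      simp only [Term.subst_var']
      show (elimS x v x).subst σ' = v.subst fun z => (elimS x v z).subst σ'
      rw [← Term.subst_subst, hvθ]
      simp [elimS]
    · show p.1.subst _ = p.2.subst _
      rw [← Term.subst_subst, ← Term.subst_subst]
      exact hσ'.1 _ (List.mem_map_of_mem h)
  · intro τ hτ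
    have hτx : τ x = v.subst τ := by simpa using hτ _ (List.mem_cons_self)
    have hτE : USys τ (E'.map fun p => (p.1.subst (elimS x v), p.2.subst (elimS x v))) := by
      intro p hp
      simp only [List.mem_map] at hp
      obtain ⟨q, hq, rfl⟩ := hp
      simp only
      rw [subst_elim_eq hτx, subst_elim_eq hτx]
      exact hτ q (List.mem_cons_of_mem _ hq)
    obtain ⟨δ, hδ⟩ := hσ'.2 τ hτE
    refine ⟨δ, fun z => ?_⟩
    have : (fun w => (σ' w).subst δ) = τ := funext fun w => (hδ w).symm
    calc τ z = (Term.var z).subst τ := (Term.subst_var' τ z).symm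
    _ = ((Term.var z).subst (elimS x v)).subst τ := (subst_elim_eq hτx _).symm
    _ = ((elimS x v z).subst σ').subst δ := by
        rw [Term.subst_var', Term.subst_subst, this]

theorem USys_swap {σ : Nat → Term F} {a b : Term F} {E : List (Term F × Term F)} :
    USys σ ((a, b) :: E) ↔ USys σ ((b, a) :: E) := by
  constructor <;> intro h p hp <;> rcases List.mem_cons.1 hp with h1 | h1
  · subst h1; exact (h _ (List.mem_cons_self)).symm
  · exact h _ (List.mem_cons_of_mem _ h1)
  · subst h1; exact (h _ (List.mem_cons_self)).symm
  · exact h _ (List.mem_cons_of_mem _ h1)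

theorem map_eq_iff_zip {m : Term F → Term F} :
    ∀ {ts us : List (Term F)}, ts.length = us.length →
      (ts.map m = us.map m ↔ ∀ p ∈ ts.zip us, m p.1 = m p.2)
  | [], [], _ => by simp
  | t :: ts, u :: us, h => by
    simp only [List.map_cons, List.cons.injEq, List.zip_cons_cons, List.mem_cons]
    rw [map_eq_iff_zip (by simpa using h)]
    constructor
    · rintro ⟨h1, h2⟩ p hp
      rcases hp with rfl | hp
      · exact h1
      · exact h2 p hp
    · intro h1
      exact ⟨h1 _ (Or.inl rfl), fun p hp => h1 p (Or.inr hp)⟩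

theorem SE_zip : ∀ {ts us : List (Term F)}, ts.length = us.length →
    SE (ts.zip us) = (ts.map Term.size).sum + (us.map Term.size).sum
  | [], [], _ => by simp [SE]
  | t :: ts, u :: us, h => by
    simp only [List.zip_cons_cons, SE, List.map_cons, List.sum_cons] at *
    rw [show ((ts.zip us).map fun p => p.1.size + p.2.size).sum = SE (ts.zip us) from rfl,
      SE_zip (by simpa using h)]
    omega
theorem VE_tail_subset {p : Term F × Term F} {E : List (Term F × Term F)} :
    VE E ⊆ VE (p :: E) := by
  intro y hy
  rw [mem_VE] at hy ⊢
  obtain ⟨q, hq, h⟩ := hy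
  exact ⟨q, List.mem_cons_of_mem _ hq, h⟩

theorem unify_sys : ∀ (k s : ℕ) (E : List (Term F × Term F)),
    (VE E).card ≤ k → SE E ≤ s → (∃ μ, USys μ E) → ∃ σ, IsMGUSys σ E := by
  intro k
  induction k using Nat.strong_induction_on with
  | _ k ihk =>
  intro s
  induction s using Nat.strong_induction_on with
  | _ s ihs =>
  intro E hk hs hex
  obtain ⟨μ, hμ⟩ := hex
  match E with
  | [] =>
    exact ⟨Term.var, fun p hp => absurd hp (List.not_mem_nil),
      fun τ _ => ⟨τ, fun x => (Term.subst_var' τ x).symm⟩⟩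
  | (u, v) :: E' =>
    -- the head-variable binding case, shared between (var, t) and (t, var)
    have bindCase : ∀ (x : Nat) (w : Term F), x ∉ w.varsL →
        (∃ ν, USys ν ((Term.var x, w) :: E')) →
        x ∈ VE ((u, v) :: E') → VE ((Term.var x, w) :: E') ⊆ VE ((u, v) :: E') →
        ∃ σ, IsMGUSys σ ((Term.var x, w) :: E') := by
      intro x w hxw ⟨ν, hν⟩ hxmem hVsub
      set θ := elimS x w with hθ
      set E'' := E'.map fun p => (p.1.subst θ, p.2.subst θ) with hE''
      have hνx : ν x = w.subst ν := by simpa using hν _ (List.mem_cons_self)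
      have hνE'' : USys ν E'' := by
        intro p hp
        simp only [hE'', List.mem_map] at hp
        obtain ⟨q, hq, rfl⟩ := hp
        simp only
        rw [subst_elim_eq hνx, subst_elim_eq hνx]
        exact hν q (List.mem_cons_of_mem _ hq)
      -- variable count strictly decreases
      have hsub : VE E'' ⊆ VE ((u, v) :: E') := by
        intro y hy
        rw [mem_VE] at hy
        obtain ⟨p, hp, hcase⟩ := hy
        simp only [hE'', List.mem_map] at hp
        obtain ⟨q, hq, rfl⟩ := hp
        have : ∃ z, (z ∈ q.1.varsL ∨ z ∈ q.2.varsL) ∧ y ∈ (θ z).varsL := by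
          rcases hcase with h | h
          · obtain ⟨z, hz, hyz⟩ := Term.mem_varsL_subst h; exact ⟨z, Or.inl hz, hyz⟩
          · obtain ⟨z, hz, hyz⟩ := Term.mem_varsL_subst h; exact ⟨z, Or.inr hz, hyz⟩
        obtain ⟨z, hz, hyz⟩ := this
        by_cases hzx : z = x
        · simp only [hθ, elimS, if_pos hzx] at hyz
          refine hVsub ?_
          rw [mem_VE]
          exact ⟨(Term.var x, w), List.mem_cons_self, Or.inr hyz⟩
        · simp only [hθ, elimS, if_neg hzx, Term.varsL_var, List.mem_singleton] at hyz
          subst hyz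
          exact VE_tail_subset ((mem_VE).2 ⟨q, hq, hz⟩)
      have hxnot : x ∉ VE E'' := by
        intro hx
        rw [mem_VE] at hx
        obtain ⟨p, hp, hcase⟩ := hx
        simp only [hE'', List.mem_map] at hp
        obtain ⟨q, hq, rfl⟩ := hp
        have : ∃ z, x ∈ (θ z).varsL := by
          rcases hcase with h | h
          · obtain ⟨z, _, hyz⟩ := Term.mem_varsL_subst h; exact ⟨z, hyz⟩
          · obtain ⟨z, _, hyz⟩ := Term.mem_varsL_subst h; exact ⟨z, hyz⟩
        obtain ⟨z, hz⟩ := this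
        by_cases hzx : z = x
        · simp only [hθ, elimS, if_pos hzx] at hz; exact hxw hz
        · simp only [hθ, elimS, if_neg hzx, Term.varsL_var, List.mem_singleton] at hz
          exact hzx hz.symm
      have hcard : (VE E'').card < (VE ((u, v) :: E')).card :=
        Finset.card_lt_card ⟨hsub, fun hcontra => hxnot (hcontra hxmem)⟩
      obtain ⟨σ', hσ'⟩ := ihk (VE E'').card (lt_of_lt_of_le hcard hk) (SE E'') E''
        le_rfl le_rfl ⟨ν, hνE''⟩
      exact ⟨_, bind_mgu hxw hσ'⟩
    match u, v with
    | Term.var x, v =>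
      by_cases hvx : v = Term.var x
      · -- trivial pair, drop it
        subst hvx
        have hslt : SE E' < s := by
          have : SE ((Term.var x, Term.var x) :: E') = 2 + SE E' := by
            simp [SE]
          omega
        obtain ⟨σ, hσ⟩ := ihs (SE E') hslt E'
          (le_trans (Finset.card_le_card VE_tail_subset) hk) le_rfl
          ⟨μ, fun p hp => hμ p (List.mem_cons_of_mem _ hp)⟩
        refine ⟨σ, fun p hp => ?_, fun τ hτ => hσ.2 τ fun p hp => hτ p (List.mem_cons_of_mem _ hp)⟩
        rcases List.mem_cons.1 hp with h | h
        · subst h; rfl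
        · exact hσ.1 p h
      · -- binding case
        have hocc : x ∉ v.varsL := by
          intro hocc
          match v, hocc with
          | Term.var y, hocc =>
            simp only [Term.varsL_var, List.mem_singleton] at hocc
            exact hvx (by rw [hocc])
          | Term.app f ts, hocc =>
            have h1 : μ x = (Term.app f ts).subst μ := by
              simpa using hμ _ (List.mem_cons_self)
            exact Term.occurs_ne hocc h1
        exact bindCase x v hocc ⟨μ, hμ⟩
          ((mem_VE).2 ⟨_, List.mem_cons_self, Or.inl (by simp)⟩) (fun y hy => hy)
    | Term.app f ts, Term.var x =>
      have h1 : (Term.app f ts).subst μ = μ x := by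
        simpa using hμ _ (List.mem_cons_self)
      have hocc : x ∉ (Term.app f ts).varsL := fun hocc => Term.occurs_ne hocc h1.symm
      have hswapunif : ∃ ν, USys ν ((Term.var x, Term.app f ts) :: E') :=
        ⟨μ, USys_swap.1 hμ⟩
      have hxmem : x ∈ VE ((Term.app f ts, Term.var x) :: E') :=
        (mem_VE).2 ⟨_, List.mem_cons_self, Or.inr (by simp)⟩
      have hVsub : VE ((Term.var x, Term.app f ts) :: E') ⊆
          VE ((Term.app f ts, Term.var x) :: E') := by
        intro y hy
        rw [mem_VE] at hy ⊢
        obtain ⟨p, hp, h⟩ := hy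
        rcases List.mem_cons.1 hp with h2 | h2
        · subst h2; exact ⟨_, List.mem_cons_self, h.symm⟩
        · exact ⟨p, List.mem_cons_of_mem _ h2, h⟩
      obtain ⟨σ, hσ⟩ := bindCase x (Term.app f ts) hocc hswapunif hxmem hVsub
      exact ⟨σ, USys_swap.1 hσ.1, fun τ hτ => hσ.2 τ (USys_swap.1 hτ)⟩
    | Term.app f ts, Term.app g us =>
      have h1 : (Term.app f ts).subst μ = (Term.app g us).subst μ :=
        hμ _ (List.mem_cons_self)
      simp only [Term.subst_app, Term.app.injEq] at h1
      obtain ⟨rfl, hmap⟩ := h1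
      have hlen : ts.length = us.length := by
        have := congrArg List.length hmap; simpa using this
      set E'' := ts.zip us ++ E' with hE''
      have hequiv : ∀ σ : Nat → Term F, USys σ ((Term.app f ts, Term.app f us) :: E') ↔
          USys σ E'' := by
        intro σ
        constructor
        · intro h p hp
          rcases List.mem_append.1 hp with h2 | h2
          · have := h _ (List.mem_cons_self)
            simp only [Term.subst_app, Term.app.injEq] at this
            exact (map_eq_iff_zip hlen).1 this.2 p h2
          · exact h p (List.mem_cons_of_mem _ h2)
        · intro h p hp
          rcases List.mem_cons.1 hp with h2 | h2
          · subst h2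
            simp only [Term.subst_app, Term.app.injEq]
            exact ⟨trivial, (map_eq_iff_zip hlen).2 fun q hq => h q (List.mem_append_left _ hq)⟩
          · exact h p (List.mem_append_right _ h2)
      have hslt : SE E'' < s := by
        have h2 : SE E'' = SE (ts.zip us) + SE E' := by simp [SE, hE'']
        have h3 : SE ((Term.app f ts, Term.app f us) :: E') =
            2 + ((ts.map Term.size).sum + (us.map Term.size).sum) + SE E' := by
          simp [SE]; omega
        rw [SE_zip hlen] at h2
        omega
      have hVsub : VE E'' ⊆ VE ((Term.app f ts, Term.app f us) :: E') := by
        intro y hy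
        rw [mem_VE] at hy ⊢
        obtain ⟨p, hp, h⟩ := hy
        rcases List.mem_append.1 hp with h2 | h2
        · have hmem := List.of_mem_zip h2
          refine ⟨_, List.mem_cons_self, ?_⟩
          rcases h with h | h
          · exact Or.inl (by
              simp only [Term.varsL_app, List.mem_flatten, List.mem_map]
              exact ⟨p.1.varsL, ⟨p.1, hmem.1, rfl⟩, h⟩)
          · exact Or.inr (by
              simp only [Term.varsL_app, List.mem_flatten, List.mem_map]
              exact ⟨p.2.varsL, ⟨p.2, hmem.2, rfl⟩, h⟩)
        · exact ⟨p, List.mem_cons_of_mem _ h2, h⟩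
      obtain ⟨σ, hσ⟩ := ihs (SE E'') hslt E''
        (le_trans (Finset.card_le_card hVsub) hk) le_rfl ⟨μ, (hequiv μ).1 hμ⟩
      exact ⟨σ, (hequiv σ).2 hσ.1, fun τ hτ => hσ.2 τ ((hequiv τ).1 hτ)⟩

theorem exists_isMGU {u v : Term F} (h : ∃ μ, Unifies μ u v) : ∃ σ, IsMGU σ u v := by
  obtain ⟨μ, hμ⟩ := h
  obtain ⟨σ, hσ⟩ := unify_sys (VE [(u, v)]).card (SE [(u, v)]) [(u, v)] le_rfl le_rfl
    ⟨μ, fun p hp => by rcases List.mem_cons.1 hp with h | h; · subst h; exact hμ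
                       · exact absurd h (List.not_mem_nil)⟩
  refine ⟨σ, hσ.1 _ (List.mem_cons_self), fun τ hτ => hσ.2 τ fun p hp => ?_⟩
  rcases List.mem_cons.1 hp with h | h
  · subst h; exact hτ
  · exact absurd h (List.not_mem_nil)
/-! ### Rewriting lemmas -/

theorem list_set_get?_self : ∀ (ts : List (Term F)) (i : Nat) (u : Term F),
    ts[i]? = some u → ts.set i u = ts
  | [], _, _, h => by simp at h
  | t :: ts, 0, u, h => by simp at h; simp [h]
  | t :: ts, i + 1, u, h => by
    simp only [List.getElem?_cons_succ] at h
    simp [list_set_get?_self ts i u h]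

theorem list_get?_set_self : ∀ (ts : List (Term F)) (i : Nat) (u v : Term F),
    ts[i]? = some u → (ts.set i v)[i]? = some v
  | [], _, _, _, h => by simp at h
  | t :: ts, 0, u, v, h => by simp
  | t :: ts, i + 1, u, v, h => by
    simp only [List.getElem?_cons_succ] at h
    simpa using list_get?_set_self ts i u v h

theorem list_set_set : ∀ (ts : List (Term F)) (i : Nat) (u v : Term F),
    (ts.set i u).set i v = ts.set i v
  | [], _, _, _ => rfl
  | t :: ts, 0, u, v => rfl
  | t :: ts, i + 1, u, v => by simp [list_set_set ts i u v]

theorem list_get?_append_len : ∀ (pre : List (Term F)) (a : Term F) (as : List (Term F)),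
    (pre ++ a :: as)[pre.length]? = some a
  | [], a, as => rfl
  | p :: pre, a, as => list_get?_append_len pre a as

theorem list_set_append_len : ∀ (pre : List (Term F)) (a b : Term F) (as : List (Term F)),
    (pre ++ a :: as).set pre.length b = pre ++ b :: as
  | [], a, b, as => rfl
  | p :: pre, a, b, as => by simp [list_set_append_len pre a b as]

theorem step_arg {R : TRS F} {u v : Term F} (h : OneStep R u v) {f : F}
    {ts : List (Term F)} {i : Nat} (hi : ts[i]? = some u) :
    OneStep R (Term.app f ts) (Term.app f (ts.set i v)) := by
  obtain ⟨ρ, hρ, σ, p, hsub, hrep⟩ := h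
  exact ⟨ρ, hρ, σ, i :: p, SubtermAt.there hi hsub, ReplaceAt.there hi hrep⟩

theorem star_arg {R : TRS F} {u v : Term F} (h : StarRW R u v) {f : F}
    {ts : List (Term F)} {i : Nat} (hi : ts[i]? = some u) :
    StarRW R (Term.app f ts) (Term.app f (ts.set i v)) := by
  induction h using Relation.ReflTransGen.head_induction_on generalizing ts with
  | refl => rw [list_set_get?_self ts i v hi]; exact Relation.ReflTransGen.refl
  | head hstep _ ih =>
    rename_i a c _
    refine Relation.ReflTransGen.head (step_arg hstep hi) ?_
    have := ih (ts := ts.set i c) (list_get?_set_self ts i a c hi)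
    rwa [list_set_set] at this

theorem star_args_aux {R : TRS F} {f : F} :
    ∀ {ts us : List (Term F)}, List.Forall₂ (StarRW R) ts us →
      ∀ pre, StarRW R (Term.app f (pre ++ ts)) (Term.app f (pre ++ us)) := by
  intro ts us h
  induction h with
  | nil => intro pre; exact Relation.ReflTransGen.refl
  | cons h1 h2 ih =>
    rename_i a b as bs
    intro pre
    have s1 : StarRW R (Term.app f (pre ++ a :: as)) (Term.app f (pre ++ b :: as)) := by
      have := star_arg (f := f) h1 (list_get?_append_len pre a as)
      rwa [list_set_append_len] at this
    have s2 := ih (pre ++ [b])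
    simp only [List.append_assoc, List.singleton_append] at s2
    exact s1.trans s2

theorem star_args {R : TRS F} {f : F} {ts us : List (Term F)}
    (h : List.Forall₂ (StarRW R) ts us) :
    StarRW R (Term.app f ts) (Term.app f us) := by
  have := star_args_aux (f := f) h []
  simpa using this

theorem reducible_of_subterm {R : TRS F} {t : Term F} {p : List Nat} {u : Term F}
    (h : SubtermAt t p u) (hred : ∃ v, OneStep R u v) : ∃ w, OneStep R t w := by
  induction h with
  | here => exact hred
  | there hget _ ih =>
    obtain ⟨w, hw⟩ := ih hred
    exact ⟨_, step_arg hw hget⟩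

theorem nf_subterm {R : TRS F} {t : Term F} (hnf : NormalForm R t) {p : List Nat}
    {u : Term F} (h : SubtermAt t p u) : NormalForm R u := by
  intro v hv
  obtain ⟨w, hw⟩ := reducible_of_subterm h ⟨v, hv⟩
  exact hnf w hw

theorem exists_nf {R : TRS F} (hterm : Terminating R) (t : Term F) : ∃ u, NFof R t u := by
  induction t using WellFounded.induction hterm with
  | _ t ih =>
  by_cases h : NormalForm R t
  · exact ⟨t, Relation.ReflTransGen.refl, h⟩
  · simp only [NormalForm, not_forall, not_not] at h
    obtain ⟨v, hv⟩ := h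
    obtain ⟨u, hu1, hu2⟩ := ih v hv
    exact ⟨u, Relation.ReflTransGen.head hv hu1, hu2⟩

theorem nf_star_eq {R : TRS F} {t u : Term F} (hnf : NormalForm R t) (h : StarRW R t u) :
    t = u := by
  induction h using Relation.ReflTransGen.head_induction_on with
  | refl => rfl
  | head hstep _ _ => exact absurd hstep (hnf _)

/-- From confluence: if `s →* w` and `s →* n` with `n` normal then `w →* n`. -/
theorem star_to_nf {R : TRS F} (hc : Confluent R) {s w n : Term F}
    (h1 : StarRW R s w) (h2 : StarRW R s n) (hn : NormalForm R n) : StarRW R w n := by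
  obtain ⟨z, hz1, hz2⟩ := hc s w n h1 h2
  rwa [← nf_star_eq hn hz2] at hz1

theorem subterm_nil {t u : Term F} (h : SubtermAt t [] u) : t = u := by
  cases h; rfl

theorem replace_nil {t u v : Term F} (h : ReplaceAt t [] u v) : u = v := by
  cases h; rfl

/-- A one-step rewrite of a term all of whose proper subterms are normal is a root step. -/
theorem eps_root_step {R : TRS F} {w w' : Term F} (heps : EpsIrreducible R w)
    (h : OneStep R w w') :
    ∃ l r σ, (l, r) ∈ R ∧ w = Term.subst σ l ∧ w' = Term.subst σ r := by
  obtain ⟨⟨l, r⟩, hρ, σ, p, hsub, hrep⟩ := h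
  by_cases hp : p = []
  · subst hp
    have h1 := subterm_nil hsub
    have h2 := replace_nil hrep
    exact ⟨l, r, σ, hρ, h1, h2.symm⟩
  · exfalso
    have hnf := heps p _ hsub hp
    exact hnf (Term.subst σ r) ⟨(l, r), hρ, σ, [], SubtermAt.here _, ReplaceAt.here _ _⟩

theorem root_subst {t : Term F} {f : F} (h : t.root = some f) (σ : Nat → Term F) :
    (t.subst σ).root = some f := by
  cases t with
  | var n => simp [Term.root] at h
  | app g ts => simp [Term.root] at h ⊢; subst h; simp [Term.root]

theorem nonvar_root {t : Term F} (h : ¬ t.IsVar) : ∃ f, t.root = some f := by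
  cases t with
  | var n => exact absurd trivial h
  | app f ts => exact ⟨f, rfl⟩
theorem forall₂_mem_right {α β : Type*} {r : α → β → Prop} :
    ∀ {l1 : List α} {l2 : List β}, List.Forall₂ r l1 l2 → ∀ b ∈ l2, ∃ a, r a b := by
  intro l1 l2 h
  induction h with
  | nil => intro b hb; exact absurd hb (List.not_mem_nil)
  | cons h1 _ ih =>
    intro b hb
    rcases List.mem_cons.1 hb with rfl | hb
    · exact ⟨_, h1⟩
    · exact ih b hb

theorem args_eps {R : TRS F} {h : F} {ws : List (Term F)}
    (hws : ∀ u ∈ ws, NormalForm R u) : EpsIrreducible R (Term.app h ws) := by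
  intro p u hsub hp
  cases hsub with
  | here => exact absurd rfl hp
  | there hget hsub' =>
    rename_i u₀ _
    exact nf_subterm (hws u₀ (List.mem_of_getElem? hget)) hsub'

theorem normalized_args_step' {F : Type} (R : TRS F) (hlm : LMSystem R)
    (l r : Term F) (hrule : (l, r) ∈ R)
    (f g : F) (hl : l.root = some f) (hr : r.root = some g)
    (ss ts ss' ts' : List (Term F))
    (hss : List.Forall₂ (NFof R) ss ss') (hts : List.Forall₂ (NFof R) ts ts')
    (hj : Joinable R (Term.app f ss) (Term.app g ts)) :
    RuleStep (l, r) (Term.app f ss') (Term.app g ts') ∧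
      ∃ τ : Nat → Term F, Term.app g ts' = r.subst τ := by
  classical
  obtain ⟨hconf, hterm⟩ := hlm.convergent
  have fne : f ≠ g := by
    have := hlm.quasiDet.2.1 (l, r) (Set.mem_union_left _ hrule)
    simp only [hl, hr] at this
    exact fun h => this (by rw [h])
  -- normal forms of the arguments
  have hssnf : ∀ u ∈ ss', NormalForm R u := fun u hu => by
    obtain ⟨a, ha⟩ := forall₂_mem_right hss u hu; exact ha.2
  have htsnf : ∀ u ∈ ts', NormalForm R u := fun u hu => by
    obtain ⟨a, ha⟩ := forall₂_mem_right hts u hu; exact ha.2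
  -- the common normal form n
  obtain ⟨u0, hu1, hu2⟩ := hj
  obtain ⟨n, hn1, hn2⟩ := exists_nf hterm u0
  have hsn : StarRW R (Term.app f ss) n := hu1.trans hn1
  have htn : StarRW R (Term.app g ts) n := hu2.trans hn1
  have hs' : StarRW R (Term.app f ss) (Term.app f ss') :=
    star_args (hss.imp fun _ _ h => h.1)
  have ht' : StarRW R (Term.app g ts) (Term.app g ts') :=
    star_args (hts.imp fun _ _ h => h.1)
  have hs'n : StarRW R (Term.app f ss') n := star_to_nf hconf hs' hsn hn2
  have ht'n : StarRW R (Term.app g ts') n := star_to_nf hconf ht' htn hn2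
  -- root-step extraction for reducible normalized-argument terms
  have getRoot : ∀ (h : F) (ws : List (Term F)), (∀ u ∈ ws, NormalForm R u) →
      ¬ NormalForm R (Term.app h ws) → StarRW R (Term.app h ws) n →
      ∃ l₁ r₁ σ₁, (l₁, r₁) ∈ R ∧ Term.app h ws = l₁.subst σ₁ ∧ n = r₁.subst σ₁ ∧
        l₁.root = some h ∧ n.root = r₁.root := by
    intro h ws hwsnf hred hwn
    have heps := args_eps (h := h) hwsnf
    have hstep : OneStep R (Term.app h ws) n :=
      hlm.forwardClosed _ ⟨heps, hred⟩ n ⟨hwn, hn2⟩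
    obtain ⟨l₁, r₁, σ₁, hρ, he1, he2⟩ := eps_root_step heps hstep
    have hnv := hlm.quasiDet.1 (l₁, r₁) (Set.mem_union_left _ hρ)
    obtain ⟨f₁, hf₁⟩ := nonvar_root hnv.1
    obtain ⟨g₁, hg₁⟩ := nonvar_root hnv.2
    have hroot1 : l₁.root = some h := by
      have := root_subst hf₁ σ₁
      rw [← he1] at this
      simp only [Term.root] at this
      rw [hf₁, this]
    have hroot2 : n.root = r₁.root := by
      rw [he2, root_subst hg₁ σ₁, hg₁]
    exact ⟨l₁, r₁, σ₁, hρ, he1, he2, hroot1, hroot2⟩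
  -- t' is a normal form
  have ht'nf : NormalForm R (Term.app g ts') := by
    by_contra hred2
    obtain ⟨l₂, r₂, σ₂, hρ₂, he₂1, he₂2, hroot₂1, hroot₂2⟩ :=
      getRoot g ts' htsnf hred2 ht'n
    by_cases hs'nf : NormalForm R (Term.app f ss')
    · -- s' = n, so the rule (l₂, r₂) has root pair (g, f): swapped similarity
      have hsn' : Term.app f ss' = n := nf_star_eq hs'nf hs'n
      have hnroot : n.root = some f := by rw [← hsn']; rfl
      have hr₂root : r₂.root = some f := by rw [← hroot₂2, hnroot]
      have hsim : RootPairSimilar (l₂, r₂) (l, r) :=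
        Or.inr ⟨by rw [hroot₂1, hr], by rw [hr₂root, hl]⟩
      by_cases heq : (l₂, r₂) = (l, r)
      · have : l₂ = l := congrArg Prod.fst heq
        rw [this, hl] at hroot₂1
        exact fne (Option.some.inj hroot₂1)
      · exact hlm.quasiDet.2.2 (l₂, r₂) (Set.mem_union_left _ hρ₂) (l, r)
          (Set.mem_union_left _ hrule) heq hsim
    · -- both reducible: RHS critical pair contradiction
      obtain ⟨l₁, r₁, σ₁, hρ₁, he₁1, he₁2, hroot₁1, hroot₁2⟩ :=
        getRoot f ss' hssnf hs'nf hs'n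
      -- renaming with fresh variables
      set N : ℕ := (l₁.varsL ++ r₁.varsL).toFinset.sup id + 1 with hN
      have hNlt : ∀ y ∈ l₁.varsL ++ r₁.varsL, y < N := by
        intro y hy
        have h2 : id y ≤ _ := Finset.le_sup (f := id) (List.mem_toFinset.2 hy)
        simp only [id] at h2
        omega
      set ρ : Nat → Term F := fun z => Term.var (z + N) with hρdef
      have hren : IsRenaming ρ := ⟨fun z => z + N, fun a b h => by simp only at h; omega, fun _ => rfl⟩
      set μ : Nat → Term F := fun y => if N ≤ y then σ₂ (y - N) else σ₁ y with hμdef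
      have hμr₁ : r₁.subst μ = n := by
        rw [he₁2]
        refine Term.subst_ext r₁ fun y hy => ?_
        have : y < N := hNlt y (List.mem_append_right _ hy)
        simp [hμdef, Nat.not_le.2 this]
      have hρμ : ∀ (w : Term F), (w.subst ρ).subst μ = w.subst σ₂ := by
        intro w
        rw [Term.subst_subst]
        refine Term.subst_ext w fun z _ => ?_
        simp [hρdef, hμdef, Nat.le_add_left]
      have hunif : Unifies μ r₁ (r₂.subst ρ) := by
        rw [Unifies, hμr₁, hρμ, ← he₂2]
      obtain ⟨σ₀, hmgu⟩ := exists_isMGU ⟨μ, hunif⟩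
      obtain ⟨δ, hδ⟩ := hmgu.2 μ hunif
      have hδfun : μ = fun x => (σ₀ x).subst δ := funext hδ
      -- the critical-pair equation e
      have hμl₁ : l₁.subst μ = l₁.subst σ₁ := by
        refine Term.subst_ext l₁ fun y hy => ?_
        have : y < N := hNlt y (List.mem_append_left _ hy)
        simp [hμdef, Nat.not_le.2 this]
      have hl₂ρroot : (l₂.subst ρ).root = some g := root_subst hroot₂1 ρ
      have hne : l₁.subst σ₀ ≠ (l₂.subst ρ).subst σ₀ := by
        intro heq
        have h1 : (l₁.subst σ₀).root = some f := root_subst hroot₁1 σ₀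
        have h2 : ((l₂.subst ρ).subst σ₀).root = some g := root_subst hl₂ρroot σ₀
        rw [heq, h2] at h1
        exact fne (Option.some.inj h1).symm
      have he : (l₁.subst σ₀, (l₂.subst ρ).subst σ₀) ∈ RHSset R :=
        Set.mem_union_right _ ⟨l₁, r₁, l₂, r₂, ρ, σ₀, hρ₁, hρ₂, hren, hmgu, hne, rfl⟩
      have hsim : RootPairSimilar (l₁.subst σ₀, (l₂.subst ρ).subst σ₀) (l, r) :=
        Or.inl ⟨by rw [root_subst hroot₁1 σ₀, hl], by rw [root_subst hl₂ρroot σ₀, hr]⟩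
      by_cases heq : (l₁.subst σ₀, (l₂.subst ρ).subst σ₀) = (l, r)
      · -- then r would be reducible, contradicting right-reducedness
        have hr2 : (l₂.subst ρ).subst σ₀ = r := congrArg Prod.snd heq
        have hrnf : NormalForm R r := hlm.rightReduced (l, r) hrule
        refine hrnf ((r₂.subst fun z => (ρ z).subst σ₀)) ?_
        refine ⟨(l₂, r₂), hρ₂, fun z => (ρ z).subst σ₀, [], ?_, ?_⟩
        · rw [show Term.subst (fun z => (ρ z).subst σ₀) (l₂, r₂).1 =
              (l₂.subst ρ).subst σ₀ from (Term.subst_subst l₂ ρ σ₀).symm, hr2]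
          exact SubtermAt.here r
        · exact ReplaceAt.here r _
      · exact hlm.quasiDet.2.2 _ he (l, r) (Set.mem_union_left _ hrule) heq hsim
  -- hence t' is the common normal form n
  have ht'eq : Term.app g ts' = n := nf_star_eq ht'nf ht'n
  -- s' must be reducible
  have hs'red : ¬ NormalForm R (Term.app f ss') := by
    intro hs'nf
    have : Term.app f ss' = n := nf_star_eq hs'nf hs'n
    rw [← ht'eq] at this
    injection this with h1 h2
    exact fne h1
  obtain ⟨l₁, r₁, σ₁, hρ₁, he₁1, he₁2, hroot₁1, hroot₁2⟩ :=
    getRoot f ss' hssnf hs'red hs'n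
  have hnroot : n.root = some g := by rw [← ht'eq]; rfl
  have hr₁root : r₁.root = some g := by rw [← hroot₁2, hnroot]
  have heq : (l₁, r₁) = (l, r) := by
    by_contra hne
    exact hlm.quasiDet.2.2 (l₁, r₁) (Set.mem_union_left _ hρ₁) (l, r)
      (Set.mem_union_left _ hrule) hne
      (Or.inl ⟨by rw [hroot₁1, hl], by rw [hr₁root, hr]⟩)
  obtain ⟨rfl, rfl⟩ := Prod.mk.injEq .. ▸ heq
  constructor
  · refine ⟨σ₁, [], ?_, ?_⟩
    · rw [show Term.subst σ₁ (l₁, r₁).1 = l₁.subst σ₁ from rfl, ← he₁1]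
      exact SubtermAt.here _
    · rw [show Term.subst σ₁ (l₁, r₁).2 = r₁.subst σ₁ from rfl, ← he₁2, ht'eq]
      exact ReplaceAt.here _ _
  · exact ⟨σ₁, by rw [ht'eq, he₁2]⟩
/-- if `f(s₁,…,sₘ)` and `g(t₁,…,tₙ)` are joinable and `l → r ∈ R` has root
pair `(f, g)`, then the term with normalized arguments on the `f` side rewrites in one
step by `l → r` to the one on the `g` side, which is an instance of `r`. -/
theorem normalized_args_step {F : Type} (R : TRS F) (hlm : LMSystem R)
    (l r : Term F) (hrule : (l, r) ∈ R)
    (f g : F) (hl : l.root = some f) (hr : r.root = some g)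
    (ss ts ss' ts' : List (Term F))
    (hss : List.Forall₂ (NFof R) ss ss') (hts : List.Forall₂ (NFof R) ts ts')
    (hj : Joinable R (Term.app f ss) (Term.app g ts)) :
    RuleStep (l, r) (Term.app f ss') (Term.app g ts') ∧
      ∃ τ : Nat → Term F, Term.app g ts' = r.subst τ := by
  exact normalized_args_step' R hlm l r hrule f g hl hr ss ts ss' ts' hss hts hj
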